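/- In two-way r-bootstrap percolation on T_L^d, the minimum size of a b-eternal set is exactly 2^{r-1}: there exists a set of 2^{r-1} nodes (the even-part of an r-dimensional hyper-square) such that if they are all black in some configuration then black nodes exist in all future configurations, and no set of fewer than 2^{r-1} nodes has this property. -/

import Mathlib

open scoped Classical ENNReal
open MeasureTheory Filter

/-- Vertices of the `d`-dimensional torus with side length `L`. -/
abbrev TorusV (d L : ℕ) := Fin d → ZMod L

/-- The `d`-dimensional torus graph `T_L^d`: two nodes are adjacent iff they differ
by `±1 (mod L)` in exactly one coordinate. -/
def torusGraph (d L : ℕ) : SimpleGraph (TorusV d L) where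
  Adj v u := v ≠ u ∧ ∃ j, (u j = v j + 1 ∨ u j = v j - 1) ∧ ∀ k, k ≠ j → u k = v k
  symm := by
    refine ⟨?_⟩
    rintro v u ⟨hne, j, hj, hk⟩
    refine ⟨hne.symm, j, ?_, fun k hkj => (hk k hkj).symm⟩
    rcases hj with h | h
    · right; rw [h]; ring
    · left; rw [h]; ring
  loopless := ⟨by rintro v ⟨hne, -⟩; exact hne rfl⟩

/-- One round of two-way `r`-bootstrap percolation on a finite graph:
a node is black in the next round iff it has at least `r` black neighbors. -/
noncomputable def gStep {V : Type*} [Fintype V] (G : SimpleGraph V) (r : ℕ)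
    (C : V → Bool) : V → Bool :=
  fun v => decide (r ≤ (Finset.univ.filter (fun u => G.Adj v u ∧ C u = true)).card)

/-- One round of (ordinary) `r`-bootstrap percolation: black nodes stay black, and a white
node becomes black iff it has at least `r` black neighbors. -/
noncomputable def bpStep {V : Type*} [Fintype V] (G : SimpleGraph V) (r : ℕ)
    (C : V → Bool) : V → Bool :=
  fun v => C v || decide (r ≤ (Finset.univ.filter (fun u => G.Adj v u ∧ C u = true)).card)

/-- One round of the majority model: each node adopts the most frequent color among its
neighbors, keeping its own color in case of a tie. -/
noncomputable def majStep {V : Type*} [Fintype V] (G : SimpleGraph V)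
    (C : V → Bool) : V → Bool :=
  fun v =>
    let b := (Finset.univ.filter (fun u => G.Adj v u ∧ C u = true)).card
    let w := (Finset.univ.filter (fun u => G.Adj v u ∧ C u = false)).card
    if w < b then true else if b < w then false else C v

/-- `S` is an `(r,c)`-robust set in two-way `r`-BP: whenever all nodes of `S` have color `c`,
they keep color `c` in all subsequent configurations. (`true` = black, `false` = white.) -/
noncomputable def isRobust {V : Type*} [Fintype V] (G : SimpleGraph V) (r : ℕ) (c : Bool)
    (S : Finset V) : Prop :=
  ∀ C : V → Bool, (∀ v ∈ S, C v = c) → ∀ t, ∀ v ∈ S, (gStep G r)^[t] C v = c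

/-- `S` is a b-eternal set in two-way `r`-BP: whenever all nodes of `S` are black, every
subsequent configuration contains at least one black node. -/
noncomputable def isBEternal {V : Type*} [Fintype V] (G : SimpleGraph V) (r : ℕ)
    (S : Finset V) : Prop :=
  ∀ C : V → Bool, (∀ v ∈ S, C v = true) → ∀ t, ∃ v, (gStep G r)^[t] C v = true

/-- The node of a hyper-square at start `i` obtained by incrementing the coordinates in `S`. -/
def hsNode {d L : ℕ} (i : TorusV d L) (S : Finset (Fin d)) : TorusV d L :=
  fun j => if j ∈ S then i j + 1 else i j

/-- The hyper-square with starting node `i` and coordinate set `J` (an `J.card`-dimensional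
hyper-square). -/
noncomputable def hyperSquare {d L : ℕ} (i : TorusV d L) (J : Finset (Fin d)) :
    Finset (TorusV d L) :=
  J.powerset.image (hsNode i)

/-- The even-part of the hyper-square: nodes differing from the start in an even number of
coordinates. -/
noncomputable def evenPart {d L : ℕ} (i : TorusV d L) (J : Finset (Fin d)) :
    Finset (TorusV d L) :=
  (J.powerset.filter (fun S => Even S.card)).image (hsNode i)

/-- The odd-part of the hyper-square: nodes differing from the start in an odd number of
coordinates. -/
noncomputable def oddPart {d L : ℕ} (i : TorusV d L) (J : Finset (Fin d)) :
    Finset (TorusV d L) :=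
  (J.powerset.filter (fun S => Odd S.card)).image (hsNode i)

/-- The hyper-rectangle of size `l 0 × ⋯ × l (d-1)` starting at node `i`. -/
noncomputable def hyperRect {d L : ℕ} [NeZero L] (i : TorusV d L) (l : Fin d → ℕ) :
    Finset (TorusV d L) :=
  Finset.univ.filter (fun v => ∀ j, ∃ m : ℕ, m ≤ l j ∧ v j = i j + (m : ZMod L))

/-- The parity of a hyper-square of the tiling: parity of the sum of the last `d - r`
coordinates of its starting node. -/
def tpar (d L r : ℕ) (i : TorusV d L) : ℕ :=
  (∑ j ∈ Finset.univ.filter (fun j : Fin d => r ≤ (j : ℕ)), (i j).val) % 2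

/-- A hyper-square of the tiling (start `i`, coordinate set = first `r` coordinates) is
occupied: its even-part is fully black if its parity is even, and its odd-part is fully
black if its parity is odd. -/
noncomputable def occupiedHS (d L r : ℕ) (i : TorusV d L) (C : TorusV d L → Bool) : Prop :=
  if tpar d L r i = 0 then
    ∀ v ∈ evenPart i (Finset.univ.filter (fun j : Fin d => (j : ℕ) < r)), C v = true
  else
    ∀ v ∈ oddPart i (Finset.univ.filter (fun j : Fin d => (j : ℕ) < r)), C v = true

/-- The Bernoulli measure on `Bool` with success (black) probability `p` (clamped to `1`). -/
noncomputable def bernoulliMeasure (p : ℝ≥0∞) : Measure Bool :=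
  (PMF.bernoulli (min p 1).toNNReal (by simpa using ENNReal.toNNReal_mono ENNReal.one_ne_top (min_le_right p 1))).toMeasure

/-- The product measure on configurations: each node is independently black with
probability `p`. -/
noncomputable def productMeasure (V : Type*) [Fintype V] (p : ℝ≥0∞) :
    Measure (V → Bool) :=
  Measure.pi (fun _ : V => bernoulliMeasure p)


open scoped Classical

variable {α : Type*} [DecidableEq α]

/-- toggle membership of `a` -/
def tog (a : α) (S : Finset α) : Finset α :=
  if a ∈ S then S.erase a else insert a S

lemma tog_tog (a : α) (S : Finset α) : tog a (tog a S) = S := by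
  unfold tog
  by_cases h : a ∈ S
  · simp [h, Finset.insert_erase h]
  · simp [h]

lemma tog_subset {a : α} {S J : Finset α} (ha : a ∈ J) (hS : S ⊆ J) : tog a S ⊆ J := by
  unfold tog
  by_cases h : a ∈ S
  · simp only [h, if_true]; exact (Finset.erase_subset a S).trans hS
  · simp only [h, if_false]; exact Finset.insert_subset ha hS

lemma tog_card {a : α} {S : Finset α} :
    (tog a S).card = if a ∈ S then S.card - 1 else S.card + 1 := by
  unfold tog
  by_cases h : a ∈ S
  · simp [h, Finset.card_erase_of_mem h]
  · simp [h, Finset.card_insert_of_notMem h]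

lemma even_tog_card {a : α} {S : Finset α} :
    Even (tog a S).card ↔ ¬ Even S.card := by
  rw [tog_card]
  by_cases h : a ∈ S
  · simp only [h, if_true]
    obtain ⟨k, hk⟩ := Nat.exists_eq_add_of_le (Finset.card_pos.mpr ⟨a, h⟩)
    rw [hk]
    rw [Nat.add_comm]
    simp [Nat.even_add_one, Nat.not_even_iff_odd]
  · simp only [h, if_false, Nat.even_add_one]

lemma mem_tog_self (a : α) (S : Finset α) : a ∈ tog a S ↔ a ∉ S := by
  unfold tog
  by_cases h : a ∈ S <;> simp [h]

lemma mem_tog_of_ne {a b : α} (hab : b ≠ a) (S : Finset α) : b ∈ tog a S ↔ b ∈ S := by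
  unfold tog
  by_cases h : a ∈ S <;> simp [h, hab, Finset.mem_erase, Finset.mem_insert]

lemma card_powerset_filter_even {J : Finset α} {r : ℕ} (hJ : J.card = r) (hr : 1 ≤ r) :
    (J.powerset.filter (fun S => Even S.card)).card = 2 ^ (r - 1) := by
  obtain ⟨a, ha⟩ : ∃ a, a ∈ J := Finset.card_pos.mp (by omega : 0 < J.card)
  have hbij : (J.powerset.filter (fun S => Even S.card)).card =
      (J.powerset.filter (fun S => ¬ Even S.card)).card := by
    apply Finset.card_bij' (fun S _ => tog a S) (fun S _ => tog a S)
    · intro S hS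
      simp only [Finset.mem_filter, Finset.mem_powerset] at hS ⊢
      exact ⟨tog_subset ha hS.1, by rw [even_tog_card]; simp [hS.2]⟩
    · intro S hS
      simp only [Finset.mem_filter, Finset.mem_powerset] at hS ⊢
      exact ⟨tog_subset ha hS.1, even_tog_card.mpr hS.2⟩
    · intro S _; exact tog_tog a S
    · intro S _; exact tog_tog a S
  have hsum : (J.powerset.filter (fun S => Even S.card)).card +
      (J.powerset.filter (fun S => ¬ Even S.card)).card = 2 ^ r := by
    rw [Finset.card_filter_add_card_filter_not, Finset.card_powerset, hJ]
  have h2 : 2 ^ r = 2 ^ (r - 1) * 2 := by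
    rw [← pow_succ]
    congr 1
    omega
  omega


/-- centered-ish lift of `ZMod L` to `ℤ` with window parameter `K`. -/
def lev (L K : ℕ) (c : ZMod L) : ℤ :=
  if c.val ≤ K then (c.val : ℤ) else (c.val : ℤ) - L

lemma lev_zero (L K : ℕ) [NeZero L] : lev L K 0 = 0 := by
  unfold lev
  simp [ZMod.val_zero]

lemma lev_add_one (L K : ℕ) [NeZero L] (hK : 2 * K + 2 ≤ L) (c : ZMod L)
    (h : |lev L K c| ≤ (K : ℤ) - 1) : lev L K (c + 1) = lev L K c + 1 := by
  have hL1 : 1 < L := by omega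
  haveI : Fact (1 < L) := ⟨hL1⟩
  have hval : (c + 1).val = (c.val + 1) % L := by
    rw [ZMod.val_add, ZMod.val_one]
  have hmlt : c.val < L := ZMod.val_lt c
  have habs := abs_nonneg (lev L K c)
  have hK1 : 1 ≤ K := by omega
  unfold lev at h ⊢
  by_cases hm : c.val ≤ K
  · -- small case
    simp only [hm, if_true] at h
    have hm1 : c.val ≤ K - 1 := by
      rw [abs_le] at h
      omega
    have h2 : (c.val + 1) % L = c.val + 1 := Nat.mod_eq_of_lt (by omega)
    rw [hval, h2]
    simp only [hm, if_true]
    have : c.val + 1 ≤ K := by omega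
    simp only [this, if_true]
    push_cast
    ring
  · simp only [hm, if_false] at h
    have hlb : L - K + 1 ≤ c.val + 1 := by
      rw [abs_le] at h
      omega
    by_cases he : c.val + 1 = L
    · have h2 : (c.val + 1) % L = 0 := by rw [he, Nat.mod_self]
      rw [hval, h2]
      simp only [Nat.zero_le, if_true]
      simp only [hm, if_false]
      push_cast
      omega
    · have h2 : (c.val + 1) % L = c.val + 1 := Nat.mod_eq_of_lt (by omega)
      rw [hval, h2]
      have : ¬ (c.val + 1 ≤ K) := by omega
      simp only [this, if_false, hm]
      push_cast
      ring

lemma lev_sub_one (L K : ℕ) [NeZero L] (hK : 2 * K + 2 ≤ L) (c : ZMod L)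
    (h : |lev L K c| ≤ (K : ℤ) - 1) : lev L K (c - 1) = lev L K c - 1 := by
  have hL1 : 1 < L := by omega
  have hneg : (c - 1) = c + ((L - 1 : ℕ) : ZMod L) := by
    have : ((L - 1 : ℕ) : ZMod L) = -1 := by
      have hLcast : ((L : ℕ) : ZMod L) = 0 := ZMod.natCast_self L
      have : ((L - 1 : ℕ) : ZMod L) + 1 = ((L : ℕ) : ZMod L) := by
        rw [← Nat.cast_add_one]
        congr 1
        omega
      rw [hLcast] at this
      linear_combination this
    rw [this]
    ring
  have hvalL1 : ((L - 1 : ℕ) : ZMod L).val = L - 1 := ZMod.val_natCast_of_lt (by omega)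
  have hval : (c - 1).val = (c.val + (L - 1)) % L := by
    rw [hneg, ZMod.val_add, hvalL1]
  have hmlt : c.val < L := ZMod.val_lt c
  have habs := abs_nonneg (lev L K c)
  have hK1 : 1 ≤ K := by omega
  unfold lev at h ⊢
  by_cases hm : c.val ≤ K
  · simp only [hm, if_true] at h
    by_cases h0 : c.val = 0
    · have h2 : (c.val + (L - 1)) % L = L - 1 := by
        rw [h0, Nat.zero_add, Nat.mod_eq_of_lt (by omega)]
      rw [hval, h2]
      have : ¬ (L - 1 ≤ K) := by omega
      simp only [this, if_false, hm, if_true, h0]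
      push_cast
      omega
    · have h2 : (c.val + (L - 1)) % L = c.val - 1 := by
        have : c.val + (L - 1) = L + (c.val - 1) := by omega
        rw [this, Nat.add_mod_left, Nat.mod_eq_of_lt (by omega)]
      rw [hval, h2]
      have : c.val - 1 ≤ K := by omega
      simp only [this, if_true, hm]
      push_cast
      omega
  · simp only [hm, if_false] at h
    have hlb : L - K ≤ c.val := by
      rw [abs_le] at h
      omega
    have h0 : c.val ≠ 0 := by omega
    have h2 : (c.val + (L - 1)) % L = c.val - 1 := by
      have : c.val + (L - 1) = L + (c.val - 1) := by omega
      rw [this, Nat.add_mod_left, Nat.mod_eq_of_lt (by omega)]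
    rw [hval, h2]
    have : ¬ (c.val - 1 ≤ K) := by omega
    simp only [this, if_false, hm]
    push_cast
    omega

section AuxTorus

variable {d L : ℕ}

lemma one_ne_zero_zmod (hL : 2 ≤ L) : (1 : ZMod L) ≠ 0 := by
  haveI : Fact (1 < L) := ⟨hL⟩
  exact one_ne_zero

lemma hsNode_inj (hL : 2 ≤ L) (i : TorusV d L) {S S' : Finset (Fin d)}
    (h : hsNode i S = hsNode i S') : S = S' := by
  ext j
  by_contra hc
  have hj := congrFun h j
  unfold hsNode at hj
  rcases Decidable.em (j ∈ S) with hS | hS <;> rcases Decidable.em (j ∈ S') with hS' | hS'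
  · exact hc ⟨fun _ => hS', fun _ => hS⟩
  · simp only [hS, hS', if_true, if_false] at hj
    have h0 : i j + 1 = i j + 0 := by rw [hj, add_zero]
    exact one_ne_zero_zmod hL (add_left_cancel h0)
  · simp only [hS, hS', if_true, if_false] at hj
    have h0 : i j + 0 = i j + 1 := by rw [add_zero]; exact hj
    exact one_ne_zero_zmod hL (add_left_cancel h0).symm
  · exact hc (by tauto)

lemma hsNode_adj (hL : 2 ≤ L) (i : TorusV d L) (S : Finset (Fin d)) (j : Fin d) :
    (torusGraph d L).Adj (hsNode i S) (hsNode i (tog j S)) := by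
  constructor
  · intro h
    have := hsNode_inj hL i h
    have hmem := (mem_tog_self j S)
    rw [← this] at hmem
    tauto
  · refine ⟨j, ?_, ?_⟩
    · unfold hsNode
      rcases Decidable.em (j ∈ S) with hS | hS
      · right
        have : j ∉ tog j S := by rw [mem_tog_self]; simp [hS]
        simp only [hS, this, if_true, if_false]
        ring
      · left
        have : j ∈ tog j S := by rw [mem_tog_self]; simp [hS]
        simp only [hS, this, if_true, if_false]
    · intro k hk
      unfold hsNode
      exact if_congr (mem_tog_of_ne hk S) rfl rfl

lemma gStep_true_of_card {V : Type*} [Fintype V] (G : SimpleGraph V) (r : ℕ)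
    (C : V → Bool) (v : V) (P : Finset V)
    (hP : r ≤ P.card) (h : ∀ u ∈ P, G.Adj v u ∧ C u = true) :
    gStep G r C v = true := by
  unfold gStep
  rw [decide_eq_true_iff]
  calc r ≤ P.card := hP
    _ ≤ (Finset.univ.filter (fun u => G.Adj v u ∧ C u = true)).card := by
        apply Finset.card_le_card
        intro u hu
        simp only [Finset.mem_filter, Finset.mem_univ, true_and]
        exact h u hu

lemma blinker_step {r : ℕ} [NeZero L] (hL : 2 ≤ L) (i : TorusV d L) (J : Finset (Fin d))
    (hrJ : r ≤ J.card) (C : TorusV d L → Bool) (pa : Prop)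
    (hC : ∀ T, T ⊆ J → (Even T.card ↔ pa) → C (hsNode i T) = true) :
    ∀ S, S ⊆ J → (Even S.card ↔ ¬ pa) →
      gStep (torusGraph d L) r C (hsNode i S) = true := by
  intro S hSJ hSpa
  apply gStep_true_of_card _ _ _ _ (J.image (fun j => hsNode i (tog j S)))
  · rw [Finset.card_image_of_injOn]
    · exact hrJ
    · intro j _ j' _ hjj'
      by_contra hne
      have h2 := hsNode_inj hL i hjj'
      have m1 := mem_tog_self j S
      have m2 := (mem_tog_of_ne (hne : j ≠ j') S)
      rw [h2] at m1
      rw [m1] at m2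
      tauto
  · intro u hu
    simp only [Finset.mem_image] at hu
    obtain ⟨j, hjJ, rfl⟩ := hu
    refine ⟨hsNode_adj hL i S j, ?_⟩
    apply hC _ (tog_subset hjJ hSJ)
    rw [even_tog_card]
    tauto

lemma blinker_forever {r : ℕ} [NeZero L] (hL : 2 ≤ L) (i : TorusV d L)
    (J : Finset (Fin d)) (hrJ : r ≤ J.card) (C : TorusV d L → Bool)
    (hC : ∀ T, T ⊆ J → Even T.card → C (hsNode i T) = true) :
    ∀ t, ∀ S, S ⊆ J → (Even S.card ↔ Even t) →
      (gStep (torusGraph d L) r)^[t] C (hsNode i S) = true := by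
  intro t
  induction t with
  | zero =>
      intro S hSJ hpar
      simp only [Function.iterate_zero, id]
      exact hC S hSJ (hpar.mpr (by simp))
  | succ t ih =>
      intro S hSJ hpar
      rw [Function.iterate_succ_apply']
      apply blinker_step hL i J hrJ _ (Even t)
      · intro T hTJ hTpar
        exact ih T hTJ hTpar
      · exact hSJ
      · rw [Nat.even_add_one] at hpar
        tauto

end AuxTorus

lemma lev_neg (L K : ℕ) [NeZero L] (hK : 2 * K + 2 ≤ L) (c : ZMod L)
    (h : |lev L K c| ≤ (K : ℤ) - 1) : lev L K (-c) = - lev L K c := by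
  have hmlt : c.val < L := ZMod.val_lt c
  have habs := abs_nonneg (lev L K c)
  have hK1 : 1 ≤ K := by omega
  by_cases h0 : c = 0
  · subst h0; simp [lev_zero]
  · have hv0 : c.val ≠ 0 := by
      intro hc; exact h0 ((ZMod.val_eq_zero c).mp hc)
    have hvneg : (-c).val = L - c.val := by
      rw [ZMod.neg_val]
      simp [h0]
    unfold lev at h ⊢
    rw [hvneg]
    by_cases hm : c.val ≤ K
    · simp only [hm, if_true] at h ⊢
      have hsm : c.val ≤ K - 1 := by rw [abs_le] at h; omega
      have : ¬ (L - c.val ≤ K) := by omega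
      simp only [this, if_false]
      push_cast
      omega
    · simp only [hm, if_false] at h ⊢
      have : L - K ≤ c.val := by rw [abs_le] at h; omega
      have h2 : L - c.val ≤ K := by omega
      simp only [h2, if_true]
      push_cast
      omega

section ChainPart

variable {d L : ℕ}

/-- ancestry chains: every cell of `Y j` has at least `r` neighbors in `Y (j+1)`. -/
def AncChain (G : SimpleGraph (TorusV d L)) (r : ℕ) (Y : ℕ → Finset (TorusV d L))
    (n : ℕ) : Prop :=
  ∀ j, j < n → ∀ x ∈ Y j, r ≤ ((Y (j+1)).filter (fun u => G.Adj x u)).card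

lemma chain_nonempty {G : SimpleGraph (TorusV d L)} {r : ℕ} {Y : ℕ → Finset (TorusV d L)}
    {n : ℕ} (hch : AncChain G r Y n) (hr : 1 ≤ r) (hne : (Y 0).Nonempty) :
    ∀ j, j ≤ n → (Y j).Nonempty := by
  intro j
  induction j with
  | zero => intro _; exact hne
  | succ j ih =>
      intro hj
      obtain ⟨x, hx⟩ := ih (by omega)
      have := hch j (by omega) x hx
      have hpos : 0 < ((Y (j+1)).filter (fun u => G.Adj x u)).card := by omega
      obtain ⟨u, hu⟩ := Finset.card_pos.mp hpos
      exact ⟨u, (Finset.mem_filter.mp hu).1⟩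

/-- ancestry closure of `v` inside a chain -/
noncomputable def anc (G : SimpleGraph (TorusV d L)) (Y : ℕ → Finset (TorusV d L))
    (v : TorusV d L) : ℕ → Finset (TorusV d L)
  | 0 => {v}
  | (j+1) => (Y (j+1)).filter (fun u => ∃ x ∈ anc G Y v j, G.Adj x u)

lemma anc_subset {G : SimpleGraph (TorusV d L)} {Y : ℕ → Finset (TorusV d L)}
    {v : TorusV d L} (hv : v ∈ Y 0) : ∀ j, anc G Y v j ⊆ Y j := by
  intro j
  cases j with
  | zero => intro x hx; simp only [anc, Finset.mem_singleton] at hx; rwa [hx]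
  | succ j => intro x hx; exact (Finset.mem_filter.mp hx).1

lemma anc_chain {G : SimpleGraph (TorusV d L)} {r n : ℕ} {Y : ℕ → Finset (TorusV d L)}
    {v : TorusV d L} (hch : AncChain G r Y n) (hv : v ∈ Y 0) :
    AncChain G r (anc G Y v) n := by
  intro j hj x hx
  have hxY : x ∈ Y j := anc_subset hv j hx
  refine le_trans (hch j hj x hxY) (Finset.card_le_card ?_)
  intro u hu
  rw [Finset.mem_filter] at hu ⊢
  constructor
  · show u ∈ (Y (j+1)).filter _
    rw [Finset.mem_filter]
    exact ⟨hu.1, ⟨x, hx, hu.2⟩⟩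
  · exact hu.2

/-- every cell of the ancestry stays within lev-window `j` of `v` in every coordinate -/
lemma anc_window {r n : ℕ} [NeZero L] (hK : 2 * r + 2 ≤ L)
    {Y : ℕ → Finset (TorusV d L)} {v : TorusV d L} (hn : n ≤ r - 1) (hr : 2 ≤ r) :
    ∀ j, j ≤ n → ∀ x ∈ anc (torusGraph d L) Y v j, ∀ b : Fin d,
      |lev L r (x b - v b)| ≤ (j : ℤ) := by
  intro j
  induction j with
  | zero =>
      intro _ x hx b
      simp only [anc, Finset.mem_singleton] at hx
      subst hx
      simp [lev_zero]
  | succ j ih =>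
      intro hj x hx b
      obtain ⟨hxY, y, hy, hadj⟩ := Finset.mem_filter.mp hx
      have hyw := ih (by omega) y hy
      obtain ⟨hne, c, hc, hother⟩ := hadj
      have hjr : (j : ℤ) ≤ (r : ℤ) - 1 := by
        have : j ≤ r - 1 := by omega
        omega
      by_cases hbc : b = c
      · subst hbc
        have hwin : |lev L r (y b - v b)| ≤ (r : ℤ) - 1 := le_trans (hyw b) hjr
        rcases hc with h1 | h1
        · have : x b - v b = (y b - v b) + 1 := by rw [h1]; ring
          rw [this, lev_add_one L r hK _ hwin]
          have hb := hyw b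
          rw [abs_le] at hb ⊢
          push_cast
          omega
        · have : x b - v b = (y b - v b) - 1 := by rw [h1]; ring
          rw [this, lev_sub_one L r hK _ hwin]
          have hb := hyw b
          rw [abs_le] at hb ⊢
          push_cast
          omega
      · rw [hother b hbc]
        have hb := hyw b
        rw [abs_le] at hb ⊢
        push_cast
        omega

/-- oriented level in direction `a` relative to `v` -/
noncomputable def slev (L K : ℕ) (a : Fin d) (v : TorusV d L) (ε : Bool)
    (x : TorusV d L) : ℤ :=
  lev L K (if ε then x a - v a else v a - x a)

lemma slev_self (K : ℕ) [NeZero L] (a : Fin d) (v : TorusV d L) (ε : Bool) :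
    slev L K a v ε v = 0 := by
  unfold slev
  cases ε <;> simp [lev_zero]

lemma abs_slev_le {r : ℕ} [NeZero L] (hK : 2 * r + 2 ≤ L) (a : Fin d) (v : TorusV d L)
    (ε : Bool) (x : TorusV d L) {B : ℤ} (hB : B ≤ (r : ℤ) - 1)
    (h : |lev L r (x a - v a)| ≤ B) : |slev L r a v ε x| ≤ B := by
  unfold slev
  cases ε
  · simp only [Bool.false_eq_true, if_false]
    have : v a - x a = -(x a - v a) := by ring
    rw [this, lev_neg L r hK _ (le_trans h hB), abs_neg]
    exact h
  · simpa using h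

/-- how slev changes along an adjacency step in direction `a` -/
lemma slev_step_up {r : ℕ} [NeZero L] (hK : 2 * r + 2 ≤ L) (a : Fin d) (v : TorusV d L)
    (ε : Bool) (x u : TorusV d L) (hw : |slev L r a v ε x| ≤ (r : ℤ) - 1)
    (hu : u a = x a + 1) :
    slev L r a v ε u = slev L r a v ε x + (if ε then 1 else -1) := by
  unfold slev at hw ⊢
  cases ε
  · simp only [Bool.false_eq_true, if_false] at hw ⊢
    have : v a - u a = (v a - x a) - 1 := by rw [hu]; ring
    rw [this, lev_sub_one L r hK _ hw]
    ring
  · simp only [if_true] at hw ⊢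
    have : u a - v a = (x a - v a) + 1 := by rw [hu]; ring
    rw [this, lev_add_one L r hK _ hw]

lemma slev_step_down {r : ℕ} [NeZero L] (hK : 2 * r + 2 ≤ L) (a : Fin d) (v : TorusV d L)
    (ε : Bool) (x u : TorusV d L) (hw : |slev L r a v ε x| ≤ (r : ℤ) - 1)
    (hu : u a = x a - 1) :
    slev L r a v ε u = slev L r a v ε x - (if ε then 1 else -1) := by
  unfold slev at hw ⊢
  cases ε
  · simp only [Bool.false_eq_true, if_false] at hw ⊢
    have : v a - u a = (v a - x a) + 1 := by rw [hu]; ring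
    rw [this, lev_add_one L r hK _ hw]
    ring
  · simp only [if_true] at hw ⊢
    have : u a - v a = (x a - v a) - 1 := by rw [hu]; ring
    rw [this, lev_sub_one L r hK _ hw]

lemma slev_of_ne {K : ℕ} (a : Fin d) (v : TorusV d L) (ε : Bool) (x u : TorusV d L)
    (h : u a = x a) : slev L K a v ε u = slev L K a v ε x := by
  unfold slev
  rw [h]

/-- classification of slev along adjacency + determination of the cell when slev drops -/
lemma adj_slev_lt {r : ℕ} [NeZero L] (hK : 2 * r + 2 ≤ L) (a : Fin d) {v : TorusV d L}
    (ε : Bool) {x u : TorusV d L} (hw : |slev L r a v ε x| ≤ (r : ℤ) - 1)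
    (hadj : (torusGraph d L).Adj x u) (hlt : slev L r a v ε u < slev L r a v ε x) :
    (∀ k, k ≠ a → u k = x k) ∧ u a = (if ε then x a - 1 else x a + 1) := by
  obtain ⟨hne, c, hc, hother⟩ := hadj
  have hca : c = a := by
    by_contra hca
    have := hother a (fun h => hca h.symm)
    rw [slev_of_ne a v ε x u this] at hlt
    omega
  subst hca
  constructor
  · intro k hk; exact hother k hk
  · cases ε
    · simp only [Bool.false_eq_true, if_false]
      rcases hc with h1 | h1
      · exact h1
      · exfalso
        rw [slev_step_down hK c v false x u hw h1] at hlt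
        simp only [Bool.false_eq_true, if_false] at hlt
        omega
    · simp only [if_true]
      rcases hc with h1 | h1
      · exfalso
        rw [slev_step_up hK c v true x u hw h1] at hlt
        simp only [if_true] at hlt
        omega
      · exact h1

lemma adj_slev_gt {r : ℕ} [NeZero L] (hK : 2 * r + 2 ≤ L) (a : Fin d) {v : TorusV d L}
    (ε : Bool) {x u : TorusV d L} (hw : |slev L r a v ε x| ≤ (r : ℤ) - 1)
    (hadj : (torusGraph d L).Adj x u) (hlt : slev L r a v ε x < slev L r a v ε u) :
    (∀ k, k ≠ a → u k = x k) ∧ u a = (if ε then x a + 1 else x a - 1) := by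
  obtain ⟨hne, c, hc, hother⟩ := hadj
  have hca : c = a := by
    by_contra hca
    have := hother a (fun h => hca h.symm)
    rw [slev_of_ne a v ε x u this] at hlt
    omega
  subst hca
  constructor
  · intro k hk; exact hother k hk
  · cases ε
    · simp only [Bool.false_eq_true, if_false]
      rcases hc with h1 | h1
      · exfalso
        rw [slev_step_up hK c v false x u hw h1] at hlt
        simp only [Bool.false_eq_true, if_false] at hlt
        omega
      · exact h1
    · simp only [if_true]
      rcases hc with h1 | h1
      · exact h1
      · exfalso
        rw [slev_step_down hK c v true x u hw h1] at hlt
        simp only [if_true] at hlt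
        omega

theorem chain_lower [NeZero L] :
    ∀ r : ℕ, 1 ≤ r → 2 * r + 2 ≤ L →
    ∀ n : ℕ, ∀ Y : ℕ → Finset (TorusV d L),
      AncChain (torusGraph d L) r Y n → (Y 0).Nonempty →
      2 ^ (min n (r - 1)) ≤ (Y n).card := by
  intro r
  induction r using Nat.strong_induction_on with
  | _ r ihr =>
  intro hr hL n
  induction n using Nat.strong_induction_on with
  | _ n ihn =>
  intro Y hch hne
  rcases Nat.eq_zero_or_pos n with hn0 | hn1
  · subst hn0
    simpa using Finset.card_pos.mpr hne
  rcases eq_or_lt_of_le hr with hr1 | hr2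
  · have hmin : min n (r - 1) = 0 := by omega
    rw [hmin, pow_zero]
    exact Finset.card_pos.mpr (chain_nonempty hch hr hne n le_rfl)
  rcases lt_or_ge (r - 1) n with hnr | hnr
  · -- truncation case : n > r - 1
    set m := n - (r - 1) with hm
    have hch' : AncChain (torusGraph d L) r (fun j => Y (j + m)) (r - 1) := by
      intro j hj x hx
      show r ≤ ((Y ((j + 1) + m)).filter (fun u => (torusGraph d L).Adj x u)).card
      rw [show (j + 1) + m = (j + m) + 1 from by omega]
      exact hch (j + m) (by omega) x hx
    have hne' : ((fun j => Y (j + m)) 0).Nonempty := by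
      show (Y (0 + m)).Nonempty
      rw [Nat.zero_add]
      exact chain_nonempty hch hr hne m (by omega)
    have hres := ihn (r - 1) (by omega) (fun j => Y (j + m)) hch' hne'
    simp only [show (r - 1) + m = n from by omega] at hres
    have he3 : min n (r - 1) = r - 1 := by omega
    rw [he3]
    refine le_trans ?_ hres
    apply Nat.pow_le_pow_right (by omega)
    omega
  -- main case : 1 ≤ n ≤ r - 1, 2 ≤ r
  obtain ⟨v, hv⟩ := hne
  set A := anc (torusGraph d L) Y v with hA
  have hAch : AncChain (torusGraph d L) r A n := anc_chain hch hv
  have hvA : v ∈ A 0 := by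
    show v ∈ ({v} : Finset (TorusV d L))
    exact Finset.mem_singleton_self v
  have hwin := anc_window (d := d) (L := L) (r := r) (n := n) (Y := Y) (v := v)
      hL hnr hr2
  have h0 := hAch 0 hn1 v hvA
  obtain ⟨p, hp⟩ := Finset.card_pos.mp (lt_of_lt_of_le (by omega) h0)
  rw [Finset.mem_filter] at hp
  obtain ⟨hpA, hpadj⟩ := hp
  obtain ⟨hnep, a, ha, hother⟩ := hpadj
  have hw0 : ∀ ε : Bool, |slev L r a v ε v| ≤ (r : ℤ) - 1 := by
    intro ε
    rw [slev_self]
    simp only [abs_zero]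
    omega
  have hslevp : ∃ ε : Bool, slev L r a v ε p = 1 := by
    rcases ha with h1 | h1
    · refine ⟨true, ?_⟩
      rw [slev_step_up hL a v true v p (hw0 true) h1, slev_self]
      simp
    · refine ⟨false, ?_⟩
      rw [slev_step_down hL a v false v p (hw0 false) h1, slev_self]
      simp
  obtain ⟨ε, hp1⟩ := hslevp
  have hwinr : ∀ j, j ≤ n → ∀ x ∈ A j, |slev L r a v ε x| ≤ (r : ℤ) - 1 := by
    intro j hj x hx
    refine le_trans (abs_slev_le hL a v ε x (B := (j : ℤ)) (by push_cast; omega)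
      (hwin j hj x hx a)) ?_
    push_cast
    omega
  -- upper chain
  have hUch : AncChain (torusGraph d L) (r - 1)
      (fun j => (A (j + 1)).filter (fun x => 1 ≤ slev L r a v ε x)) (n - 1) := by
    intro j hj x hx
    rw [Finset.mem_filter] at hx
    obtain ⟨hxA, hxsl⟩ := hx
    have hxw : |slev L r a v ε x| ≤ (r : ℤ) - 1 := hwinr (j + 1) (by omega) x hxA
    have hcard := hAch (j + 1) (by omega) x hxA
    set F := (A (j + 1 + 1)).filter (fun u => (torusGraph d L).Adj x u) with hF
    have hFsplit := Finset.card_filter_add_card_filter_not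
      (s := F) (p := fun u => 1 ≤ slev L r a v ε u)
    have hlow : (F.filter (fun u => ¬ 1 ≤ slev L r a v ε u)).card ≤ 1 := by
      rw [Finset.card_le_one]
      intro u hu u' hu'
      rw [Finset.mem_filter] at hu hu'
      rw [hF, Finset.mem_filter] at hu hu'
      have h1 : slev L r a v ε u < slev L r a v ε x := by omega
      have h1' : slev L r a v ε u' < slev L r a v ε x := by omega
      obtain ⟨hk, hka⟩ := adj_slev_lt hL a ε hxw hu.1.2 h1
      obtain ⟨hk', hka'⟩ := adj_slev_lt hL a ε hxw hu'.1.2 h1'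
      funext k
      by_cases hkk : k = a
      · subst hkk; rw [hka, hka']
      · rw [hk k hkk, hk' k hkk]
    have hcard' : r ≤ F.card := hcard
    have hup : r - 1 ≤ (F.filter (fun u => 1 ≤ slev L r a v ε u)).card := by omega
    refine le_trans hup (Finset.card_le_card ?_)
    intro u hu
    rw [Finset.mem_filter] at hu
    rw [hF, Finset.mem_filter] at hu
    show u ∈ ((A (j + 1 + 1)).filter (fun x => 1 ≤ slev L r a v ε x)).filter
        (fun u => (torusGraph d L).Adj x u)
    rw [Finset.mem_filter, Finset.mem_filter]
    exact ⟨⟨hu.1.1, hu.2⟩, hu.1.2⟩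
  have hUne : ((fun j => (A (j + 1)).filter (fun x => 1 ≤ slev L r a v ε x)) 0).Nonempty := by
    refine ⟨p, ?_⟩
    show p ∈ (A (0 + 1)).filter (fun x => 1 ≤ slev L r a v ε x)
    rw [Finset.mem_filter]
    constructor
    · show p ∈ A 1
      exact hpA
    · rw [hp1]
  have hUbound := ihr (r - 1) (by omega) (by omega) (by omega) (n - 1)
    (fun j => (A (j + 1)).filter (fun x => 1 ≤ slev L r a v ε x)) hUch hUne
  -- lower chain
  have hDch : AncChain (torusGraph d L) (r - 1)
      (fun j => (A j).filter (fun x => ¬ 1 ≤ slev L r a v ε x)) n := by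
    intro j hj x hx
    rw [Finset.mem_filter] at hx
    obtain ⟨hxA, hxsl⟩ := hx
    have hxw : |slev L r a v ε x| ≤ (r : ℤ) - 1 := hwinr j (by omega) x hxA
    have hcard := hAch j (by omega) x hxA
    set F := (A (j + 1)).filter (fun u => (torusGraph d L).Adj x u) with hF
    have hFsplit := Finset.card_filter_add_card_filter_not
      (s := F) (p := fun u => ¬ 1 ≤ slev L r a v ε u)
    have hlow : (F.filter (fun u => ¬ ¬ 1 ≤ slev L r a v ε u)).card ≤ 1 := by
      rw [Finset.card_le_one]
      intro u hu u' hu'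
      rw [Finset.mem_filter] at hu hu'
      rw [hF, Finset.mem_filter] at hu hu'
      have h1 : slev L r a v ε x < slev L r a v ε u := by omega
      have h1' : slev L r a v ε x < slev L r a v ε u' := by omega
      obtain ⟨hk, hka⟩ := adj_slev_gt hL a ε hxw hu.1.2 h1
      obtain ⟨hk', hka'⟩ := adj_slev_gt hL a ε hxw hu'.1.2 h1'
      funext k
      by_cases hkk : k = a
      · subst hkk; rw [hka, hka']
      · rw [hk k hkk, hk' k hkk]
    have hcard' : r ≤ F.card := hcard
    have hup : r - 1 ≤ (F.filter (fun u => ¬ 1 ≤ slev L r a v ε u)).card := by omega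
    refine le_trans hup (Finset.card_le_card ?_)
    intro u hu
    rw [Finset.mem_filter] at hu
    rw [hF, Finset.mem_filter] at hu
    show u ∈ ((A (j + 1)).filter (fun x => ¬ 1 ≤ slev L r a v ε x)).filter
        (fun u => (torusGraph d L).Adj x u)
    rw [Finset.mem_filter, Finset.mem_filter]
    exact ⟨⟨hu.1.1, hu.2⟩, hu.1.2⟩
  have hDne : ((fun j => (A j).filter (fun x => ¬ 1 ≤ slev L r a v ε x)) 0).Nonempty := by
    refine ⟨v, ?_⟩
    show v ∈ (A 0).filter (fun x => ¬ 1 ≤ slev L r a v ε x)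
    rw [Finset.mem_filter]
    exact ⟨hvA, by rw [slev_self]; omega⟩
  have hDbound := ihr (r - 1) (by omega) (by omega) (by omega) n
    (fun j => (A j).filter (fun x => ¬ 1 ≤ slev L r a v ε x)) hDch hDne
  -- combine
  have hsplit := Finset.card_filter_add_card_filter_not
    (s := A n) (p := fun x => 1 ≤ slev L r a v ε x)
  have hn1' : (n - 1) + 1 = n := by omega
  rw [hn1'] at hUbound
  have hsub : (A n).card ≤ (Y n).card := Finset.card_le_card (anc_subset hv n)
  have harith : min (n - 1) ((r - 1) - 1) + 1 = min n (r - 1) := by omega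
  have hmono : 2 ^ (min (n - 1) ((r - 1) - 1)) ≤ 2 ^ (min n ((r - 1) - 1)) := by
    apply Nat.pow_le_pow_right (by omega)
    omega
  calc 2 ^ (min n (r - 1)) = 2 ^ (min (n - 1) ((r - 1) - 1)) + 2 ^ (min (n - 1) ((r - 1) - 1)) := by
        rw [← harith]
        ring
    _ ≤ ((A n).filter (fun x => 1 ≤ slev L r a v ε x)).card +
        ((A n).filter (fun x => ¬ 1 ≤ slev L r a v ε x)).card := by
        have := le_trans hmono hDbound
        omega
    _ = (A n).card := hsplit
    _ ≤ (Y n).card := hsub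

end ChainPart

theorem stmt_8 (d r : ℕ) (hr : 2 ≤ r) (hrd : r ≤ d) :
    ∃ L0 : ℕ, ∀ (L : ℕ) [NeZero L], L0 ≤ L →
      (∃ (i : TorusV d L) (J : Finset (Fin d)), J.card = r ∧
        (evenPart i J).card = 2 ^ (r - 1) ∧
        isBEternal (torusGraph d L) r (evenPart i J)) ∧
      (∀ S : Finset (TorusV d L), S.card < 2 ^ (r - 1) →
        ¬ isBEternal (torusGraph d L) r S) := by
  refine ⟨2 * r + 3, ?_⟩
  intro L _ hL
  have hL2 : 2 ≤ L := by omega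
  have hLr : 2 * r + 2 ≤ L := by omega
  constructor
  · -- positive part
    set i : TorusV d L := fun _ => 0 with hi
    set J : Finset (Fin d) := Finset.univ.filter (fun j : Fin d => (j : ℕ) < r) with hJ
    have hJcard : J.card = r := by
      have hmap : J = Finset.map ⟨Fin.castLE hrd, Fin.castLE_injective hrd⟩ Finset.univ := by
        ext j
        simp only [hJ, Finset.mem_filter, Finset.mem_univ, true_and, Finset.mem_map,
          Function.Embedding.coeFn_mk]
        constructor
        · intro h
          exact ⟨⟨(j : ℕ), h⟩, by ext; simp⟩
        · rintro ⟨k, rfl⟩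
          exact k.2
      rw [hmap, Finset.card_map, Finset.card_univ, Fintype.card_fin]
    refine ⟨i, J, hJcard, ?_, ?_⟩
    · unfold evenPart
      rw [Finset.card_image_of_injOn (fun S _ S' _ h => hsNode_inj hL2 i h)]
      exact card_powerset_filter_even hJcard (by omega)
    · intro C hC t
      have hC' : ∀ T, T ⊆ J → Even T.card → C (hsNode i T) = true := by
        intro T hTJ hTe
        apply hC
        unfold evenPart
        exact Finset.mem_image_of_mem _
          (Finset.mem_filter.mpr ⟨Finset.mem_powerset.mpr hTJ, hTe⟩)
      have hrJ : r ≤ J.card := le_of_eq hJcard.symm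
      by_cases ht : Even t
      · exact ⟨hsNode i ∅,
          blinker_forever hL2 i J hrJ C hC' t ∅ (Finset.empty_subset J) (by simpa using ht)⟩
      · obtain ⟨j0, hj0⟩ : ∃ j0, j0 ∈ J := Finset.card_pos.mp (by omega)
        refine ⟨hsNode i {j0},
          blinker_forever hL2 i J hrJ C hC' t {j0} (by simpa using hj0) ?_⟩
        simp only [Finset.card_singleton]
        constructor
        · intro h; exact absurd h (by decide)
        · intro h; exact absurd h ht
  · -- negative part
    intro S hS hBE
    classical
    set C : TorusV d L → Bool := fun v => decide (v ∈ S) with hCdef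
    have hCS : ∀ v ∈ S, C v = true := by
      intro v hv
      simp [hCdef, hv]
    obtain ⟨v, hvblack⟩ := hBE C hCS (r - 1)
    set Y : ℕ → Finset (TorusV d L) :=
      fun j => Finset.univ.filter
        (fun x => (gStep (torusGraph d L) r)^[r - 1 - j] C x = true) with hYdef
    have hch : AncChain (torusGraph d L) r Y (r - 1) := by
      intro j hj x hx
      have hx' : (gStep (torusGraph d L) r)^[r - 1 - j] C x = true := by
        have : x ∈ Finset.univ.filter
            (fun x => (gStep (torusGraph d L) r)^[r - 1 - j] C x = true) := hx
        exact (Finset.mem_filter.mp this).2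
      have ht : r - 1 - j = (r - 1 - (j + 1)) + 1 := by omega
      rw [ht, Function.iterate_succ_apply'] at hx'
      unfold gStep at hx'
      rw [decide_eq_true_iff] at hx'
      refine le_trans hx' (Finset.card_le_card ?_)
      intro u hu
      rw [Finset.mem_filter] at hu
      rw [Finset.mem_filter]
      constructor
      · show u ∈ Finset.univ.filter
          (fun x => (gStep (torusGraph d L) r)^[r - 1 - (j + 1)] C x = true)
        rw [Finset.mem_filter]
        exact ⟨Finset.mem_univ u, hu.2.2⟩
      · exact hu.2.1
    have hne : (Y 0).Nonempty := by
      refine ⟨v, ?_⟩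
      show v ∈ Finset.univ.filter
        (fun x => (gStep (torusGraph d L) r)^[r - 1 - 0] C x = true)
      rw [Finset.mem_filter]
      exact ⟨Finset.mem_univ v, by simpa using hvblack⟩
    have hbound := chain_lower r (by omega) hLr (r - 1) Y hch hne
    have hYend : Y (r - 1) = S := by
      ext x
      show x ∈ Finset.univ.filter
        (fun x => (gStep (torusGraph d L) r)^[r - 1 - (r - 1)] C x = true) ↔ x ∈ S
      rw [Finset.mem_filter, Nat.sub_self]
      simp [hCdef]
    rw [hYend] at hbound
    have hmin : min (r - 1) (r - 1) = r - 1 := by omega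
    rw [hmin] at hbound
    omega
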